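/- Let v_a(x,y) = Im((1/a)·arctan((x+iy)/a)) and y_{x,a} = (x²+a²)^{3/4}/2. Then for y_{x,a}/2 ≤ |y| ≤ y_{x,a}, |v_a(x, y)| ≥ 3/(32(x² + a²)^{1/4}). -/

import Mathlib

/-- The domain `Ω_a = {x + iy : |x| ≤ 1/2, |y| ≤ (x² + a²)^{3/4}/2}`. -/
def OmegaA (a : ℝ) : Set ℂ :=
  {z | |z.re| ≤ 1 / 2 ∧ |z.im| ≤ (z.re ^ 2 + a ^ 2) ^ ((3 : ℝ) / 4) / 2}

set_option maxHeartbeats 1000000 in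
/-- With `v_a = Im h_a` and `y_{x,a} = (x²+a²)^{3/4}/2`, for
`y_{x,a}/2 ≤ |y| ≤ y_{x,a}` one has `|v_a(x,y)| ≥ 3/(32(x²+a²)^{1/4})`. -/
theorem stmt_9 (a : ℝ) (ha : 0 < a) (ha2 : a < 1 / 2) (h : ℂ → ℂ)
    (hderiv : ∀ z ∈ OmegaA a, HasDerivAt h (1 / (z ^ 2 + (a : ℂ) ^ 2)) z)
    (hreal : ∀ x : ℝ, (x : ℂ) ∈ OmegaA a → (h x).im = 0)
    (x y : ℝ) (hx : |x| ≤ 1 / 2)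
    (hy1 : (x ^ 2 + a ^ 2) ^ ((3 : ℝ) / 4) / 4 ≤ |y|)
    (hy2 : |y| ≤ (x ^ 2 + a ^ 2) ^ ((3 : ℝ) / 4) / 2) :
    3 / (32 * (x ^ 2 + a ^ 2) ^ ((1 : ℝ) / 4))
      ≤ |(h ((x : ℂ) + y * Complex.I)).im| := by
  set s : ℝ := x ^ 2 + a ^ 2 with hs_def
  have hs0 : 0 < s := by positivity
  have hx2 : x ^ 2 ≤ 1 / 4 := by nlinarith [sq_abs x, abs_nonneg x]
  have hs1 : s ≤ 1 := by nlinarith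
  have hs34 : (0:ℝ) < s ^ ((3:ℝ)/4) := Real.rpow_pos_of_pos hs0 _
  have hkey : s ^ ((3:ℝ)/4) * s ^ ((3:ℝ)/4) ≤ s := by
    rw [← Real.rpow_add hs0]
    calc s ^ ((3:ℝ)/4 + (3:ℝ)/4) ≤ s ^ (1:ℝ) :=
          Real.rpow_le_rpow_of_exponent_ge hs0 hs1 (by norm_num)
      _ = s := Real.rpow_one s
  -- membership in the domain
  have hmem : ∀ t : ℝ, |t| ≤ |y| → ((x:ℂ) + t * Complex.I) ∈ OmegaA a := by
    intro t ht
    have hre : ((x:ℂ) + t * Complex.I).re = x := by simp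
    have him : ((x:ℂ) + t * Complex.I).im = t := by simp
    exact ⟨by rw [hre]; exact hx, by rw [him, hre]; exact ht.trans hy2⟩
  -- bound on t^2
  have ht2 : ∀ t : ℝ, |t| ≤ |y| → t ^ 2 ≤ s / 4 := by
    intro t ht
    have h1 : |t| ≤ s ^ ((3:ℝ)/4) / 2 := ht.trans hy2
    nlinarith [sq_abs t, abs_nonneg t, hkey]
  have hx2s : x ^ 2 ≤ s := by nlinarith [sq_nonneg a]
  -- lower bound for the real part of the derivative
  have hbound : ∀ t : ℝ, |t| ≤ |y| →
      3 / (8 * s) ≤ (1 / (((x:ℂ) + t * Complex.I) ^ 2 + (a:ℂ) ^ 2)).re := by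
    intro t ht
    have ht2' := ht2 t ht
    have hwre : ((((x:ℂ) + t * Complex.I) ^ 2 + (a:ℂ) ^ 2)).re = s - t ^ 2 := by
      simp [pow_two, Complex.add_re, Complex.mul_re, Complex.mul_im]
      ring
    have hwim : ((((x:ℂ) + t * Complex.I) ^ 2 + (a:ℂ) ^ 2)).im = 2 * x * t := by
      simp [pow_two, Complex.add_im, Complex.mul_re, Complex.mul_im]
      ring
    rw [one_div, Complex.inv_re, Complex.normSq_apply, hwre, hwim]
    rw [div_le_div_iff₀ (by positivity) (by nlinarith [sq_nonneg (2*x*t)])]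
    nlinarith [sq_nonneg t, mul_nonneg (sq_nonneg t) hs0.le,
      mul_nonneg (sq_nonneg t) (sq_nonneg t), mul_le_mul_of_nonneg_left ht2' (sq_nonneg t)]
  -- F and its derivative
  set F : ℝ → ℝ := fun t => (h ((x:ℂ) + t * Complex.I)).im with hF_def
  have hF : ∀ t : ℝ, |t| ≤ |y| →
      HasDerivAt F (1 / (((x:ℂ) + t * Complex.I) ^ 2 + (a:ℂ) ^ 2)).re t := by
    intro t ht
    have h1 : HasDerivAt (fun u : ℝ => (u:ℂ)) 1 t := by
      convert (hasDerivAt_id t).ofReal_comp using 1 <;> simp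
    have hl : HasDerivAt (fun u : ℝ => (x:ℂ) + u * Complex.I) Complex.I t := by
      simpa using (h1.mul_const Complex.I).const_add (x:ℂ)
    have hc := hderiv _ (hmem t ht)
    have hcomp : HasDerivAt (fun u : ℝ => h ((x:ℂ) + u * Complex.I))
        (Complex.I • (1 / (((x:ℂ) + t * Complex.I) ^ 2 + (a:ℂ) ^ 2))) t :=
      hc.scomp t hl
    have him := (Complex.imCLM.hasFDerivAt).comp_hasDerivAt t hcomp
    simp [Function.comp, Complex.mul_im] at him ⊢
    exact him
  have hy0 : 0 < |y| := lt_of_lt_of_le (by positivity) hy1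
  have hF0 : F 0 = 0 := by
    have h0 : ((x:ℂ) + ((0:ℝ):ℂ) * Complex.I) = (x:ℂ) := by simp
    have hm := hmem 0 (by simpa using hy0.le)
    rw [h0] at hm
    simp only [hF_def]
    rw [h0]
    exact hreal x hm
  -- key inequality: C * |y| ≤ |F y|
  have key : 3 / (8 * s) * |y| ≤ |F y| := by
    rcases le_or_gt 0 y with hy | hy
    · have hyy : |y| = y := abs_of_nonneg hy
      have habs : ∀ t ∈ Set.Icc (0:ℝ) y, |t| ≤ |y| := by
        intro t ht
        rw [hyy, abs_le]; exact ⟨by linarith [ht.1], ht.2⟩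
      have mv := Convex.mul_sub_le_image_sub_of_le_deriv (convex_Icc (0:ℝ) y)
        (fun t ht => ((hF t (habs t ht)).continuousAt.continuousWithinAt))
        (fun t ht => ((hF t (habs t (interior_subset ht))).differentiableAt.differentiableWithinAt))
        (fun t ht => by
          rw [(hF t (habs t (interior_subset ht))).deriv]
          exact hbound t (habs t (interior_subset ht)))
        0 (Set.left_mem_Icc.2 hy) y (Set.right_mem_Icc.2 hy) hy
      rw [hF0, sub_zero, sub_zero] at mv
      rw [hyy]
      exact mv.trans (le_abs_self _)
    · have hyy : |y| = -y := abs_of_neg hy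
      have habs : ∀ t ∈ Set.Icc y (0:ℝ), |t| ≤ |y| := by
        intro t ht
        rw [hyy, abs_le]
        constructor
        · linarith [ht.1]
        · linarith [ht.2]
      have mv := Convex.mul_sub_le_image_sub_of_le_deriv (convex_Icc y (0:ℝ))
        (fun t ht => ((hF t (habs t ht)).continuousAt.continuousWithinAt))
        (fun t ht => ((hF t (habs t (interior_subset ht))).differentiableAt.differentiableWithinAt))
        (fun t ht => by
          rw [(hF t (habs t (interior_subset ht))).deriv]
          exact hbound t (habs t (interior_subset ht)))
        y (Set.left_mem_Icc.2 hy.le) 0 (Set.right_mem_Icc.2 hy.le) hy.le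
      rw [hF0, zero_sub, zero_sub] at mv
      rw [hyy]
      calc 3 / (8 * s) * -y ≤ -F y := by linarith [mv]
        _ ≤ |F y| := neg_le_abs _
  -- final arithmetic
  have h14 : (0:ℝ) < s ^ ((1:ℝ)/4) := Real.rpow_pos_of_pos hs0 _
  have hprod : s ^ ((1:ℝ)/4) * s ^ ((3:ℝ)/4) = s := by
    rw [← Real.rpow_add hs0]; norm_num
  have hC : (0:ℝ) < 3 / (8 * s) := by positivity
  have heq : 3 / (32 * s ^ ((1:ℝ)/4)) = 3 / (8 * s) * (s ^ ((3:ℝ)/4) / 4) := by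
    rw [div_mul_div_comm, div_eq_div_iff (by positivity) (by positivity)]
    linear_combination -96 * hprod
  calc 3 / (32 * s ^ ((1:ℝ)/4)) = 3 / (8 * s) * (s ^ ((3:ℝ)/4) / 4) := heq
    _ ≤ 3 / (8 * s) * |y| := by
        apply mul_le_mul_of_nonneg_left _ hC.le
        linarith [hy1]
    _ ≤ |F y| := key
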